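/- Let n ≥ 1 and m ≥ 1 be integers and let a > 0 be a real number. Then the polyharmonic heat kernel E_{m,a} is integrable on ℝⁿ and ∫_{ℝⁿ} E_{m,a}(x) dx = 1. -/

import Mathlib

open MeasureTheory Real Complex

noncomputable def heatKernel (n m : ℕ) (a : ℝ) (x : EuclideanSpace ℝ (Fin n)) : ℂ :=
  ((2 * Real.pi) ^ n : ℝ)⁻¹ •
    ∫ s : EuclideanSpace ℝ (Fin n),
      Complex.exp (Complex.I * ((inner ℝ x s : ℝ) : ℂ) - (a : ℂ) * ((‖s‖ : ℝ) : ℂ) ^ (2 * m))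

open scoped SchwartzMap FourierTransform RealInnerProductSpace ContDiff

noncomputable section
namespace HeatKernelAux

variable {m : ℕ} {a : ℝ}

/-- The basic 1-d function `t ↦ exp (-a t^m)` (as a complex-valued function of a real var). -/
def ee (a : ℝ) (m : ℕ) (t : ℝ) : ℂ := Complex.exp (-(a:ℂ) * (t:ℂ)^m)

lemma contDiff_ee : ContDiff ℝ ∞ (ee a m) := by
  exact (contDiff_const.mul (Complex.ofRealCLM.contDiff.pow m)).cexp

lemma norm_ee (t : ℝ) : ‖ee a m t‖ = Real.exp (-(a * t ^ m)) := by
  rw [ee, Complex.norm_exp]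
  congr 1
  have : (-(a:ℂ) * (t:ℂ) ^ m) = ((-(a * t ^ m) : ℝ) : ℂ) := by push_cast; ring
  rw [this, Complex.ofReal_re]

lemma hasDerivAt_poly_ee (P : Polynomial ℂ) (t : ℝ) :
    HasDerivAt (fun t : ℝ => P.eval (t:ℂ) * ee a m t)
      ((Polynomial.derivative P - Polynomial.C ((a:ℂ) * m) * Polynomial.X ^ (m-1) * P).eval (t:ℂ)
        * ee a m t) t := by
  have h1 : HasDerivAt (fun z : ℂ => P.eval z * Complex.exp (-(a:ℂ) * z ^ m))
      ((Polynomial.derivative P).eval (t:ℂ) * Complex.exp (-(a:ℂ) * (t:ℂ) ^ m)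
        + P.eval (t:ℂ) * (Complex.exp (-(a:ℂ) * (t:ℂ) ^ m) * (-(a:ℂ) * (m * (t:ℂ) ^ (m-1)))))
      (t:ℂ) := by
    exact (P.hasDerivAt _).mul (((hasDerivAt_pow m _).const_mul (-(a:ℂ))).cexp)
  have := h1.comp_ofReal
  convert this using 1
  · rfl
  simp [Polynomial.eval_mul, Polynomial.eval_sub, ee]
  ring

lemma iteratedDeriv_ee (N : ℕ) : ∃ P : Polynomial ℂ, ∀ t : ℝ,
    iteratedDeriv N (ee a m) t = P.eval (t:ℂ) * ee a m t := by
  induction N with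
  | zero => exact ⟨1, fun t => by simp [iteratedDeriv_zero]⟩
  | succ N ih =>
    obtain ⟨P, hP⟩ := ih
    refine ⟨Polynomial.derivative P - Polynomial.C ((a:ℂ) * m) * Polynomial.X ^ (m-1) * P,
      fun t => ?_⟩
    rw [iteratedDeriv_succ]
    have : iteratedDeriv N (ee a m) = fun t : ℝ => P.eval (t:ℂ) * ee a m t := funext hP
    rw [this]
    exact (hasDerivAt_poly_ee P t).deriv

end HeatKernelAux

namespace HeatKernelAux

/-- Smooth cutoff: `0` for `t ≤ -2`, `1` for `t ≥ -1`. -/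
def cut (t : ℝ) : ℝ := Real.smoothTransition (t + 2)

lemma contDiff_cut : ContDiff ℝ ∞ cut :=
  Real.smoothTransition.contDiff.comp (contDiff_id.add contDiff_const)

lemma cut_eq_zero {t : ℝ} (h : t ≤ -2) : cut t = 0 :=
  Real.smoothTransition.zero_of_nonpos (by linarith)

lemma cut_eq_one {t : ℝ} (h : -1 ≤ t) : cut t = 1 :=
  Real.smoothTransition.one_of_one_le (by linarith)

lemma iteratedDeriv_zero_fun {N : ℕ} : iteratedDeriv N (fun _ : ℝ => (0:ℝ)) = fun _ => 0 := by
  rw [iteratedDeriv_eq_iterate]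
  have h : deriv (fun _ : ℝ => (0:ℝ)) = fun _ => 0 := by
    funext x; exact deriv_const x 0
  induction N with
  | zero => rfl
  | succ N ih => rw [Function.iterate_succ_apply, h, ih]

lemma cut_deriv_bound (N : ℕ) : ∃ B : ℝ, 0 ≤ B ∧ ∀ t : ℝ, ‖iteratedDeriv N cut t‖ ≤ B := by
  rcases Nat.eq_zero_or_pos N with rfl | hN
  · refine ⟨1, zero_le_one, fun t => ?_⟩
    simp only [iteratedDeriv_zero]
    show |Real.smoothTransition (t + 2)| ≤ 1
    rw [_root_.abs_of_nonneg (Real.smoothTransition.nonneg (t + 2))]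
    exact Real.smoothTransition.le_one _
  · have hcont : Continuous (iteratedDeriv N cut) :=
      contDiff_cut.continuous_iteratedDeriv N (by exact_mod_cast le_top)
    have hzero : ∀ t : ℝ, t ∉ Set.Icc (-2 : ℝ) (-1) → iteratedDeriv N cut t = 0 := by
      intro t ht
      rw [Set.mem_Icc, not_and_or] at ht
      rcases ht with ht | ht
      · push_neg at ht
        have : cut =ᶠ[nhds t] (fun _ => 0) := by
          filter_upwards [Iio_mem_nhds ht] with s hs
          exact cut_eq_zero (le_of_lt hs)
        rw [this.iteratedDeriv_eq, iteratedDeriv_zero_fun]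
      · push_neg at ht
        have : cut =ᶠ[nhds t] (fun _ => 1) := by
          filter_upwards [Ioi_mem_nhds ht] with s hs
          exact cut_eq_one (le_of_lt hs)
        rw [this.iteratedDeriv_eq]
        obtain ⟨N, rfl⟩ := Nat.exists_eq_add_of_lt hN
        rw [iteratedDeriv_succ']
        have : deriv (fun _ : ℝ => (1:ℝ)) = fun _ => 0 := by
          funext x; exact deriv_const x 1
        rw [zero_add, this, iteratedDeriv_zero_fun]
    have hcs : HasCompactSupport (iteratedDeriv N cut) := by
      apply HasCompactSupport.intro isCompact_Icc hzero
    obtain ⟨C, hC⟩ := (hcont.norm).bounded_above_of_compact_support hcs.norm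
    refine ⟨max C 0, le_max_right _ _, fun t => ?_⟩
    calc ‖iteratedDeriv N cut t‖ ≤ ‖‖iteratedDeriv N cut t‖‖ := le_abs_self _
    _ ≤ C := hC t
    _ ≤ max C 0 := le_max_left _ _

end HeatKernelAux

namespace HeatKernelAux

lemma poly_exp_bound (ha : 0 < a) (hm : 1 ≤ m) (P : Polynomial ℂ) (k : ℕ) :
    ∃ C : ℝ, ∀ t : ℝ, -2 ≤ t → |t| ^ k * (‖P.eval (t:ℂ)‖ * Real.exp (-(a * t ^ m))) ≤ C := by
  set d := P.natDegree with hd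
  set D := k + d with hD
  set C₀ : ℝ := ∑ i ∈ Finset.range (d+1), ‖P.coeff i‖ with hC₀def
  have hC₀ : 0 ≤ C₀ := Finset.sum_nonneg fun i _ => norm_nonneg _
  set G : ℝ → ℝ := fun t => |t| ^ k * (‖P.eval (t:ℂ)‖ * Real.exp (-(a * t ^ m))) with hG
  have hGcont : Continuous G := by
    have habs : Continuous fun t : ℝ => |t| := continuous_abs
    apply Continuous.mul (habs.pow k)
    apply Continuous.mul
    · exact ((Polynomial.continuous P).comp Complex.continuous_ofReal).norm
    · exact Real.continuous_exp.comp (continuous_const.mul (continuous_pow m)).neg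
  obtain ⟨C₁, hC₁⟩ :=
    (isCompact_Icc (a := (-2:ℝ)) (b := 1)).exists_bound_of_continuousOn hGcont.continuousOn
  refine ⟨max C₁ (C₀ * (D.factorial / a ^ D)), fun t ht => ?_⟩
  rcases le_or_gt t 1 with h1 | h1
  · have := hC₁ t ⟨ht, h1⟩
    rw [Real.norm_eq_abs] at this
    exact le_max_of_le_left ((le_abs_self _).trans this)
  · have ht0 : (0:ℝ) < t := lt_trans one_pos h1
    have ht1 : (1:ℝ) ≤ t := le_of_lt h1
    have habs : |t| = t := abs_of_pos ht0
    have heval : ‖P.eval (t:ℂ)‖ ≤ C₀ * t ^ d := by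
      rw [Polynomial.eval_eq_sum_range]
      refine (norm_sum_le _ _).trans ?_
      rw [hC₀def, Finset.sum_mul]
      apply Finset.sum_le_sum
      intro i hi
      rw [norm_mul, norm_pow, Complex.norm_real, Real.norm_eq_abs, habs]
      have : t ^ i ≤ t ^ d := pow_le_pow_right₀ ht1 (Nat.lt_succ_iff.mp (Finset.mem_range.mp hi))
      exact mul_le_mul_of_nonneg_left this (norm_nonneg _)
    have hexp : t ^ D * Real.exp (-(a * t ^ m)) ≤ D.factorial / a ^ D := by
      have haD : (0:ℝ) < a ^ D := pow_pos ha D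
      have h2 : a ^ D * t ^ D ≤ (a * t ^ m) ^ D := by
        rw [mul_pow]
        apply mul_le_mul_of_nonneg_left _ (le_of_lt haD)
        rw [← pow_mul]
        exact pow_le_pow_right₀ ht1 (Nat.le_mul_of_pos_left D hm)
      have h1' : (a * t ^ m) ^ D ≤ D.factorial * Real.exp (a * t ^ m) := by
        have := Real.pow_div_factorial_le_exp (x := a * t ^ m) (by positivity) D
        rw [div_le_iff₀ (by positivity : (0:ℝ) < (D.factorial : ℝ))] at this
        linarith [this]
      have h3 : t ^ D ≤ D.factorial / a ^ D * Real.exp (a * t ^ m) := by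
        rw [div_mul_eq_mul_div, le_div_iff₀ haD, mul_comm (t ^ D) (a ^ D)]
        calc a ^ D * t ^ D ≤ (a * t ^ m) ^ D := h2
        _ ≤ D.factorial * Real.exp (a * t ^ m) := h1'
        _ = D.factorial * Real.exp (a * t ^ m) := rfl
      rw [Real.exp_neg]
      calc t ^ D * (Real.exp (a * t ^ m))⁻¹
          ≤ D.factorial / a ^ D * Real.exp (a * t ^ m) * (Real.exp (a * t ^ m))⁻¹ :=
            mul_le_mul_of_nonneg_right h3 (inv_nonneg.mpr (Real.exp_nonneg _))
        _ = D.factorial / a ^ D := by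
            rw [mul_assoc, mul_inv_cancel₀ (Real.exp_ne_zero _), mul_one]
    apply le_max_of_le_right
    have hexp0 : 0 ≤ Real.exp (-(a * t ^ m)) := Real.exp_nonneg _
    calc |t| ^ k * (‖P.eval (t:ℂ)‖ * Real.exp (-(a * t ^ m)))
        ≤ |t| ^ k * ((C₀ * t ^ d) * Real.exp (-(a * t ^ m))) := by
          apply mul_le_mul_of_nonneg_left _ (pow_nonneg (abs_nonneg _) k)
          exact mul_le_mul_of_nonneg_right heval hexp0
      _ = C₀ * (t ^ D * Real.exp (-(a * t ^ m))) := by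
          rw [habs, hD, pow_add]; ring
      _ ≤ C₀ * (D.factorial / a ^ D) := mul_le_mul_of_nonneg_left hexp hC₀

end HeatKernelAux

namespace HeatKernelAux
variable {m : ℕ} {a : ℝ}

lemma iteratedDeriv_zero_fun' {F : Type*} [NormedAddCommGroup F] [NormedSpace ℝ F] {N : ℕ} :
    iteratedDeriv N (fun _ : ℝ => (0:F)) = fun _ => 0 := by
  rw [iteratedDeriv_eq_iterate]
  have h : deriv (fun _ : ℝ => (0:F)) = fun _ => 0 := by
    funext x; exact deriv_const x 0
  induction N with
  | zero => rfl
  | succ N ih => rw [Function.iterate_succ_apply, h, ih]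

/-- The 1-d Schwartz function `t ↦ smoothTransition (t+2) * exp (-a t^m)`. -/
def hmap (ha : 0 < a) (hm : 1 ≤ m) : 𝓢(ℝ, ℂ) where
  toFun := fun t => cut t • ee a m t
  smooth' := contDiff_cut.smul contDiff_ee
  decay' := by
    intro k N
    choose B hB0 hB using cut_deriv_bound
    choose P hP using (iteratedDeriv_ee (a := a) (m := m))
    choose C hC using fun i => poly_exp_bound ha hm (P i) k
    refine ⟨∑ i ∈ Finset.range (N+1), (N.choose i : ℝ) * B i * max (C (N - i)) 0, fun t => ?_⟩
    have hsumnn : (0:ℝ) ≤ ∑ i ∈ Finset.range (N+1),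
        (N.choose i : ℝ) * B i * max (C (N - i)) 0 := by
      apply Finset.sum_nonneg
      intro i _
      have h1 : (0:ℝ) ≤ (N.choose i : ℝ) := Nat.cast_nonneg _
      exact mul_nonneg (mul_nonneg h1 (hB0 i)) (le_max_right _ _)
    rcases lt_or_ge t (-2) with ht | ht
    · have hz : (fun t => cut t • ee a m t) =ᶠ[nhds t] (fun _ => (0:ℂ)) := by
        filter_upwards [Iio_mem_nhds ht] with s hs
        rw [cut_eq_zero (le_of_lt hs), zero_smul]
      rw [norm_iteratedFDeriv_eq_norm_iteratedDeriv, hz.iteratedDeriv_eq,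
        iteratedDeriv_zero_fun']
      simpa using hsumnn
    · have hcc : ContDiff ℝ (N : WithTop ℕ∞) cut := contDiff_cut.of_le (by exact_mod_cast le_top)
      have hce : ContDiff ℝ (N : WithTop ℕ∞) (ee a m) :=
        contDiff_ee.of_le (by exact_mod_cast le_top)
      have hsmul := norm_iteratedFDeriv_smul_le hcc hce t (le_refl (N : WithTop ℕ∞))
      calc ‖t‖ ^ k * ‖iteratedFDeriv ℝ N (fun t => cut t • ee a m t) t‖
          ≤ ‖t‖ ^ k * ∑ i ∈ Finset.range (N+1), (N.choose i : ℝ) *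
              ‖iteratedFDeriv ℝ i cut t‖ * ‖iteratedFDeriv ℝ (N-i) (ee a m) t‖ :=
            mul_le_mul_of_nonneg_left hsmul (pow_nonneg (norm_nonneg t) k)
        _ = ∑ i ∈ Finset.range (N+1), (N.choose i : ℝ) * ‖iteratedFDeriv ℝ i cut t‖ *
              (‖t‖ ^ k * ‖iteratedFDeriv ℝ (N-i) (ee a m) t‖) := by
            rw [Finset.mul_sum]
            exact Finset.sum_congr rfl fun i _ => by ring
        _ ≤ ∑ i ∈ Finset.range (N+1), (N.choose i : ℝ) * B i * max (C (N - i)) 0 := by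
            apply Finset.sum_le_sum
            intro i _
            have e1 : ‖iteratedFDeriv ℝ i cut t‖ ≤ B i := by
              rw [norm_iteratedFDeriv_eq_norm_iteratedDeriv]; exact hB i t
            have e2 : ‖t‖ ^ k * ‖iteratedFDeriv ℝ (N-i) (ee a m) t‖ ≤ max (C (N-i)) 0 := by
              rw [norm_iteratedFDeriv_eq_norm_iteratedDeriv, hP (N-i) t, norm_mul, norm_ee,
                Real.norm_eq_abs]
              exact (hC (N-i) t ht).trans (le_max_left _ _)
            have hcn : (0:ℝ) ≤ (N.choose i : ℝ) := Nat.cast_nonneg _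
            apply mul_le_mul (mul_le_mul_of_nonneg_left e1 hcn)
              e2 (mul_nonneg (pow_nonneg (norm_nonneg t) k) (norm_nonneg _))
              (mul_nonneg hcn (hB0 i))

lemma hmap_apply (ha : 0 < a) (hm : 1 ≤ m) (t : ℝ) (h : 0 ≤ t) :
    hmap ha hm t = Complex.exp (-(a:ℂ) * (t:ℂ) ^ m) := by
  show cut t • ee a m t = _
  rw [cut_eq_one (by linarith), one_smul, ee]

end HeatKernelAux

namespace HeatKernelAux
variable {m : ℕ} {a : ℝ}
variable {V : Type*} [NormedAddCommGroup V] [InnerProductSpace ℝ V]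

lemma hasTemperateGrowth_normSq :
    Function.HasTemperateGrowth (fun x : V => ‖x‖ ^ 2) := by
  have T : V →L[ℝ] V →L[ℝ] ℝ := innerSL ℝ
  apply Function.HasTemperateGrowth.of_fderiv (k := 2) (C := 1)
  · have hf : (fderiv ℝ fun x : V => ‖x‖ ^ 2) =
        ⇑((2:ℝ) • (innerSL ℝ : V →L[ℝ] V →L[ℝ] ℝ)) := by
      funext x
      rw [(hasStrictFDerivAt_norm_sq x).hasFDerivAt.fderiv]
      ext y
      show ((2:ℕ) • (innerSL ℝ x)) y = (((2:ℝ) • (innerSL ℝ : V →L[ℝ] V →L[ℝ] ℝ)) x) y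
      rw [ContinuousLinearMap.smul_apply, ContinuousLinearMap.smul_apply,
        ContinuousLinearMap.smul_apply]
      show (2:ℕ) • (inner ℝ x y : ℝ) = (2:ℝ) • (inner ℝ x y : ℝ)
      rw [nsmul_eq_mul, smul_eq_mul]
      norm_num
    rw [hf]
    exact ContinuousLinearMap.hasTemperateGrowth _
  · exact fun x => ((contDiff_norm_sq ℝ (n := 1)).differentiable one_ne_zero).differentiableAt
  · intro x
    have h : ‖x‖ ^ 2 ≤ (1 + ‖x‖) ^ 2 := by nlinarith [norm_nonneg x]
    calc ‖‖x‖ ^ 2‖ = ‖x‖ ^ 2 := by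
          rw [Real.norm_eq_abs, _root_.abs_of_nonneg (by positivity : (0:ℝ) ≤ ‖x‖ ^ 2)]
    _ ≤ (1 + ‖x‖) ^ 2 := h
    _ = 1 * (1 + ‖x‖) ^ 2 := (one_mul _).symm

/-- The Schwartz function `x ↦ exp (-a ‖x‖^(2m))` on an inner product space. -/
def fSch (ha : 0 < a) (hm : 1 ≤ m) : 𝓢(V, ℂ) :=
  SchwartzMap.compCLM (𝕜 := ℝ) hasTemperateGrowth_normSq
    ⟨1, 1, fun x => by
      rw [one_mul, pow_one, Real.norm_eq_abs,
        _root_.abs_of_nonneg (by positivity : (0:ℝ) ≤ ‖x‖ ^ 2)]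
      nlinarith [norm_nonneg x, sq_nonneg (‖x‖ - 1)]⟩ (hmap ha hm)

lemma fSch_apply (ha : 0 < a) (hm : 1 ≤ m) (x : V) :
    fSch (V := V) ha hm x = Complex.exp (-(a:ℂ) * ((‖x‖ : ℝ) : ℂ) ^ (2 * m)) := by
  show hmap ha hm (‖x‖ ^ 2) = _
  rw [hmap_apply ha hm _ (by positivity)]
  congr 1
  push_cast
  ring

end HeatKernelAux

theorem heatKernel_integrable_integral_one (n m : ℕ) (hn : 1 ≤ n) (hm : 1 ≤ m)
    (a : ℝ) (ha : 0 < a) :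
    Integrable (heatKernel n m a) ∧
    (∫ x : EuclideanSpace ℝ (Fin n), heatKernel n m a x) = 1 := by
  classical
  set V := EuclideanSpace ℝ (Fin n) with hV
  set fS : 𝓢(V, ℂ) := HeatKernelAux.fSch ha hm with hfS
  set F : 𝓢(V, ℂ) := (SchwartzMap.fourierTransformCLE ℝ 𝓢(V, ℂ)).symm fS with hFdef
  have hFeq : ⇑F = 𝓕⁻ ⇑fS := by
    rw [hFdef]; exact SchwartzMap.fourierInv_coe fS
  have hπ : (0:ℝ) < 2 * π := by positivity
  have hπn : ((2 * π) ^ n : ℝ) ≠ 0 := by positivity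
  -- pointwise identity
  have hkey : ∀ x : V, heatKernel n m a x = ((2 * π) ^ n : ℝ)⁻¹ • F ((2 * π)⁻¹ • x) := by
    intro x
    rw [heatKernel]
    congr 1
    rw [hFeq, Real.fourierInv_eq']
    apply integral_congr_ae
    filter_upwards with v
    rw [HeatKernelAux.fSch_apply, smul_eq_mul, ← Complex.exp_add]
    congr 1
    have h1 : (inner ℝ v ((2 * π)⁻¹ • x) : ℝ) = (2 * π)⁻¹ * (inner ℝ v x : ℝ) :=
      real_inner_smul_right _ _ _
    have h2 : 2 * π * (inner ℝ v ((2 * π)⁻¹ • x) : ℝ) = (inner ℝ v x : ℝ) := by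
      rw [h1]
      field_simp
    rw [h2]
    have h3 : (inner ℝ v x : ℝ) = (inner ℝ x v : ℝ) := real_inner_comm _ _
    rw [h3]
    ring
  have hkfun : heatKernel n m a = fun x : V => ((2 * π) ^ n : ℝ)⁻¹ • F ((2 * π)⁻¹ • x) :=
    funext hkey
  -- Integrability
  have hint : Integrable (heatKernel n m a) := by
    rw [hkfun]
    exact (F.integrable.comp_smul (inv_ne_zero hπ.ne')).smul ((2 * π) ^ n : ℝ)⁻¹
  refine ⟨hint, ?_⟩
  -- the Fourier transform of fS is integrable
  have h𝓕 : Integrable (𝓕 ⇑fS) := by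
    have : 𝓕 ⇑fS = ⇑(SchwartzMap.fourierTransformCLM ℝ fS) :=
      (SchwartzMap.fourier_coe fS).symm
    rw [this]
    exact SchwartzMap.integrable _
  have hinv : 𝓕 (𝓕⁻ ⇑fS) = ⇑fS :=
    Continuous.fourier_fourierInv_eq fS.continuous fS.integrable h𝓕
  have hF0 : ∀ G : V → ℂ, 𝓕 G 0 = ∫ v, G v := by
    intro G
    rw [Real.fourier_eq]
    simp
  have hintF : (∫ x : V, F x) = 1 := by
    rw [hFeq, ← hF0, hinv]
    rw [HeatKernelAux.fSch_apply]
    simp only [norm_zero, Complex.ofReal_zero]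
    rw [zero_pow (by omega : 2 * m ≠ 0), mul_zero, Complex.exp_zero]
  calc (∫ x : V, heatKernel n m a x)
      = ∫ x : V, ((2 * π) ^ n : ℝ)⁻¹ • F ((2 * π)⁻¹ • x) := by rw [hkfun]
    _ = ((2 * π) ^ n : ℝ)⁻¹ • ∫ x : V, F ((2 * π)⁻¹ • x) := integral_smul _ _
    _ = ((2 * π) ^ n : ℝ)⁻¹ • ((2 * π) ^ Module.finrank ℝ V • ∫ x : V, F x) := by
        rw [MeasureTheory.Measure.integral_comp_inv_smul_of_nonneg volume (⇑F) hπ.le]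
    _ = 1 := by
        rw [hintF, finrank_euclideanSpace_fin, smul_smul, inv_mul_cancel₀ hπn]
        simp
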